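/- The map t ↦ Φ(−√t) is convex on [0, ∞), where Φ is the standard normal CDF. -/

import Mathlib

open Real MeasureTheory Set

noncomputable def gphi : ℝ → ℝ := fun s => Real.exp (-s ^ 2 / 2) / Real.sqrt (2 * Real.pi)

lemma gphi_cont : Continuous gphi := by
  unfold gphi; fun_prop

lemma gphi_pos (s : ℝ) : 0 < gphi s := by
  unfold gphi
  positivity

lemma gphi_integrable : Integrable gphi := by
  have h : gphi = fun s => Real.exp (-(1/2) * s ^ 2) * (Real.sqrt (2 * Real.pi))⁻¹ := by
    funext s; unfold gphi; rw [div_eq_mul_inv]; ring_nf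
  rw [h]
  exact (integrable_exp_neg_mul_sq (by norm_num : (0:ℝ) < 1/2)).mul_const _

noncomputable def Gcdf : ℝ → ℝ := fun x => ∫ s in Iic x, gphi s

lemma Gcdf_hasDerivAt (x : ℝ) : HasDerivAt Gcdf (gphi x) x := by
  have heq : Gcdf = fun u => (∫ s in Iic (0:ℝ), gphi s) + ∫ s in (0:ℝ)..u, gphi s := by
    funext u
    rw [← intervalIntegral.integral_Iic_sub_Iic (gphi_integrable.integrableOn)
      (gphi_integrable.integrableOn)]
    unfold Gcdf; ring
  rw [heq]
  exact (intervalIntegral.integral_hasStrictDerivAt_right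
    (gphi_integrable.intervalIntegrable)
    (gphi_cont.stronglyMeasurableAtFilter _ _) gphi_cont.continuousAt).hasDerivAt.const_add _

lemma f_hasDerivAt {t : ℝ} (ht : 0 < t) :
    HasDerivAt (fun t => Gcdf (-Real.sqrt t))
      (-(Real.exp (-t / 2) / Real.sqrt (2 * Real.pi) / (2 * Real.sqrt t))) t := by
  have h1 : HasDerivAt (fun u : ℝ => -Real.sqrt u) (-(1 / (2 * Real.sqrt t))) t :=
    (Real.hasDerivAt_sqrt ht.ne').neg
  have h2 := (Gcdf_hasDerivAt (-Real.sqrt t)).comp t h1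
  refine h2.congr_deriv ?_
  unfold gphi
  rw [neg_pow, Real.sq_sqrt ht.le]
  ring

/-- The map `t ↦ Φ(−√t)` is convex on `[0,∞)`, where `Φ` is the standard normal CDF. -/
theorem stmt14 :
    ConvexOn ℝ (Set.Ici (0 : ℝ))
      (fun t : ℝ => ∫ s in Set.Iic (-Real.sqrt t),
        Real.exp (-s ^ 2 / 2) / Real.sqrt (2 * Real.pi)) := by
  have hfun : (fun t : ℝ => ∫ s in Set.Iic (-Real.sqrt t),
      Real.exp (-s ^ 2 / 2) / Real.sqrt (2 * Real.pi)) = fun t => Gcdf (-Real.sqrt t) := rfl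
  rw [hfun]
  have hcontG : Continuous Gcdf := by
    have : Differentiable ℝ Gcdf := fun x => (Gcdf_hasDerivAt x).differentiableAt
    exact this.continuous
  have hint : interior (Set.Ici (0:ℝ)) = Set.Ioi 0 := interior_Ici
  apply MonotoneOn.convexOn_of_deriv (convex_Ici 0)
  · exact (hcontG.comp (continuous_sqrt.neg)).continuousOn
  · rw [hint]
    intro t ht
    exact (f_hasDerivAt ht).differentiableAt.differentiableWithinAt
  · rw [hint]
    intro a ha b hb hab
    rw [(f_hasDerivAt ha).deriv, (f_hasDerivAt hb).deriv]
    rw [neg_le_neg_iff]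
    have sa : 0 < Real.sqrt a := Real.sqrt_pos.mpr ha
    have sb : 0 < Real.sqrt b := Real.sqrt_pos.mpr hb
    have h1 : Real.exp (-b / 2) ≤ Real.exp (-a / 2) := by
      apply Real.exp_le_exp.mpr; linarith
    have h2 : Real.sqrt a ≤ Real.sqrt b := Real.sqrt_le_sqrt hab
    have hpi : 0 < Real.sqrt (2 * Real.pi) := Real.sqrt_pos.mpr (by positivity)
    rw [div_le_div_iff₀ (by positivity) (by positivity)]
    have h3 : Real.exp (-b / 2) / Real.sqrt (2 * Real.pi) ≤
        Real.exp (-a / 2) / Real.sqrt (2 * Real.pi) :=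
      by gcongr
    exact mul_le_mul h3 (by linarith) (by positivity) (by positivity)
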